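/- Let (Ω, 𝔄, μ) be a probability space, 1 ≤ p ≤ ∞, and p′ the conjugate exponent (1/p + 1/p′ = 1). A measurable function g : Ω → ℝ belongs to L_{p′}(μ) if and only if f·g ∈ L_1(μ) for every f ∈ L_p(μ). -/

import Mathlib

open MeasureTheory
open scoped ENNReal NNReal


lemma aux_nnnorm_toReal (y : ℝ≥0∞) (hy : y ≠ ∞) : (‖y.toReal‖₊ : ℝ≥0∞) = y := by
  rw [← enorm_eq_nnnorm, ← ofReal_norm, Real.norm_of_nonneg ENNReal.toReal_nonneg]
  exact ENNReal.ofReal_toReal hy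

lemma aux_not_integrable {Ω : Type*} [MeasurableSpace Ω] (μ : Measure Ω)
    (F : Ω → ℝ≥0∞) (hfin : ∀ᵐ x ∂μ, F x ≠ ∞) (g : Ω → ℝ)
    (hinf : ∫⁻ x, F x * ‖g x‖₊ ∂μ = ∞) :
    ¬ Integrable (fun x => (F x).toReal * g x) μ := by
  intro hI
  have h2 : ∫⁻ x, (‖(F x).toReal * g x‖₊ : ℝ≥0∞) ∂μ < ∞ := hI.2
  have : ∫⁻ x, (‖(F x).toReal * g x‖₊ : ℝ≥0∞) ∂μ = ∫⁻ x, F x * ‖g x‖₊ ∂μ := by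
    refine lintegral_congr_ae ?_
    filter_upwards [hfin] with x hx
    rw [nnnorm_mul, ENNReal.coe_mul, aux_nnnorm_toReal _ hx]
  rw [this, hinf] at h2
  exact lt_irrefl _ h2


lemma aux_nnnorm_toReal_le (y : ℝ≥0∞) : (‖y.toReal‖₊ : ℝ≥0∞) ≤ y := by
  by_cases hy : y = ∞
  · simp [hy]
  · rw [← enorm_eq_nnnorm, ← ofReal_norm, Real.norm_of_nonneg ENNReal.toReal_nonneg,
      ENNReal.ofReal_toReal hy]

lemma aux_memLp {Ω : Type*} [MeasurableSpace Ω] (μ : Measure Ω) {p : ℝ≥0∞}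
    (hp0 : p ≠ 0) (hpt : p ≠ ∞) (F : Ω → ℝ≥0∞) (hF : Measurable F)
    (hint : ∫⁻ x, F x ^ p.toReal ∂μ ≠ ∞) : MemLp (fun x => (F x).toReal) p μ := by
  refine ⟨(hF.ennreal_toReal).aestronglyMeasurable, ?_⟩
  rw [eLpNorm_eq_lintegral_rpow_enorm_toReal hp0 hpt]
  refine ENNReal.rpow_lt_top_of_nonneg (by positivity) ?_
  refine ne_top_of_le_ne_top hint (lintegral_mono fun x => ?_)
  exact ENNReal.rpow_le_rpow (aux_nnnorm_toReal_le _) ENNReal.toReal_nonneg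

lemma aux_top_of_forall_pow {I : ℝ≥0∞} (h : ∀ k : ℕ, (2:ℝ≥0∞)^k ≤ I) : I = ∞ := by
  by_contra hI
  obtain ⟨n, hn⟩ := ENNReal.exists_nat_gt hI
  have h1 : (n:ℝ≥0∞) ≤ 2^n := by
    exact_mod_cast (Nat.lt_two_pow_self (n := n)).le
  exact absurd (h n) (by exact not_le.2 (hn.trans_le h1))

lemma case_inf {Ω : Type*} [MeasurableSpace Ω] (μ : Measure Ω) [IsProbabilityMeasure μ]
    (g : Ω → ℝ) (hg : Measurable g) (hG : eLpNormEssSup g μ = ∞) :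
    ∃ F : Ω → ℝ≥0∞, Measurable F ∧ (∫⁻ x, F x ∂μ ≠ ∞) ∧
      ∫⁻ x, F x * ‖g x‖₊ ∂μ = ∞ := by
  set G : Ω → ℝ≥0∞ := fun x => (‖g x‖₊ : ℝ≥0∞) with hGdef
  have hGmeas : Measurable G := hg.enorm
  set E : ℕ → Set Ω := fun n => {x | (4:ℝ≥0∞)^n ≤ G x} with hE
  have hEmeas : ∀ n, MeasurableSet (E n) := fun n => measurableSet_le measurable_const hGmeas
  set a : ℕ → ℝ≥0∞ := fun n => μ (E n) with ha
  have ha_top : ∀ n, a n ≠ ∞ := fun n => measure_ne_top μ _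
  have ha0 : ∀ n, a n ≠ 0 := by
    intro n h0
    have hae : ∀ᵐ x ∂μ, ‖g x‖₊ ≤ ((4:ℝ≥0)^n : ℝ≥0) := by
      have : ∀ᵐ x ∂μ, ¬ ((4:ℝ≥0∞)^n ≤ G x) := by
        rw [ae_iff]; push_neg; exact h0
      filter_upwards [this] with x hx
      rw [not_le] at hx
      have : (‖g x‖₊ : ℝ≥0∞) ≤ (((4:ℝ≥0)^n : ℝ≥0) : ℝ≥0∞) := by
        refine hx.le.trans ?_
        push_cast
        rfl
      exact_mod_cast this
    have := eLpNormEssSup_le_of_ae_nnnorm_bound hae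
    rw [hG] at this
    exact absurd this (by simp)
  set c : ℕ → ℝ≥0∞ := fun n => (a n * 2^n)⁻¹ with hc
  have hca : ∀ n, c n * a n = (2:ℝ≥0∞)⁻¹^n := by
    intro n
    show (a n * 2 ^ n)⁻¹ * a n = 2⁻¹ ^ n
    rw [ENNReal.mul_inv (Or.inl (ha0 n)) (Or.inl (ha_top n))]
    rw [mul_comm ((a n)⁻¹) _, mul_assoc, ENNReal.inv_mul_cancel (ha0 n) (ha_top n), mul_one,
      ENNReal.inv_pow]
  have hc_top : ∀ n, c n ≠ ∞ := by
    intro n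
    simp only [hc, ne_eq, ENNReal.inv_eq_top, mul_eq_zero, not_or]
    exact ⟨ha0 n, by positivity⟩
  set F : Ω → ℝ≥0∞ := fun x => ∑' n, (E n).indicator (fun _ => c n) x with hF
  have hFmeas : Measurable F :=
    Measurable.ennreal_tsum fun n => measurable_const.indicator (hEmeas n)
  have hFint : ∫⁻ x, F x ∂μ = ∑' n, (2:ℝ≥0∞)⁻¹^n := by
    rw [hF, lintegral_tsum fun n => (measurable_const.indicator (hEmeas n)).aemeasurable]
    congr 1; ext n
    rw [lintegral_indicator_const (hEmeas n), hca n]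
  refine ⟨F, hFmeas, ?_, ?_⟩
  · rw [hFint, ENNReal.tsum_geometric]
    simp [ENNReal.sub_eq_of_eq_add (by norm_num) (ENNReal.inv_two_add_inv_two).symm]
  · refine aux_top_of_forall_pow fun k => ?_
    have key : ∫⁻ x, (E k).indicator (fun _ => c k * 4^k) x ∂μ ≤ ∫⁻ x, F x * G x ∂μ := by
      refine lintegral_mono fun x => ?_
      by_cases hx : x ∈ E k
      · rw [Set.indicator_of_mem hx]
        calc c k * 4^k ≤ c k * G x := by
              exact mul_le_mul_right hx _
          _ ≤ F x * G x := by
              refine mul_le_mul_left ?_ _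
              have := ENNReal.le_tsum (f := fun n => (E n).indicator (fun _ => c n) x) k
              rwa [Set.indicator_of_mem hx] at this
      · rw [Set.indicator_of_notMem hx]; exact zero_le
    rw [lintegral_indicator_const (hEmeas k)] at key
    refine le_trans (le_of_eq ?_) key
    -- 2^k = c k * 4^k * a k
    rw [mul_comm (c k) _, mul_assoc, hca k, show (4:ℝ≥0∞)^k = 2^k * 2^k by rw [← mul_pow]; norm_num]
    rw [mul_assoc, ← mul_pow, ENNReal.mul_inv_cancel (by norm_num) (by norm_num), one_pow, mul_one]

lemma aux_mink {Ω : Type*} [MeasurableSpace Ω] (μ : Measure Ω) {s : ℝ} (hs : 1 ≤ s)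
    (φ : ℕ → Ω → ℝ≥0∞) (hφ : ∀ k, Measurable (φ k)) (N : ℕ) :
    (∫⁻ x, (∑ k ∈ Finset.range N, φ k x) ^ s ∂μ) ^ (1/s) ≤
      ∑ k ∈ Finset.range N, (∫⁻ x, φ k x ^ s ∂μ) ^ (1/s) := by
  have hs0 : (0:ℝ) < s := lt_of_lt_of_le zero_lt_one hs
  induction N with
  | zero =>
      simp [ENNReal.zero_rpow_of_pos hs0, ENNReal.zero_rpow_of_pos (by positivity : (0:ℝ) < 1/s), hs0]
  | succ N ih =>
      simp only [Finset.sum_range_succ]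
      have hmeas : Measurable (fun x => ∑ k ∈ Finset.range N, φ k x) :=
        Finset.measurable_sum _ fun k _ => hφ k
      have := ENNReal.lintegral_Lp_add_le (μ := μ)
        (f := fun x => ∑ k ∈ Finset.range N, φ k x) (g := φ N)
        hmeas.aemeasurable (hφ N).aemeasurable hs
      refine le_trans (le_of_eq ?_) (this.trans (add_le_add_left ih _))
      rfl

lemma case_lt {Ω : Type*} [MeasurableSpace Ω] (μ : Measure Ω) [IsProbabilityMeasure μ]
    {s r : ℝ} (hs : 1 < s) (hr : 1 < r) (hsr : 1/s + 1/r = 1)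
    (G : Ω → ℝ≥0∞) (hGmeas : Measurable G) (hGfin : ∀ x, G x ≠ ∞)
    (hGr : ∫⁻ x, G x ^ r ∂μ = ∞) :
    ∃ F : Ω → ℝ≥0∞, Measurable F ∧ (∫⁻ x, F x ^ s ∂μ ≠ ∞) ∧ ∫⁻ x, F x * G x ∂μ = ∞ := by
  have hs0 : (0:ℝ) < s := by linarith
  have hr0 : (0:ℝ) < r := by linarith
  have hs_ne : s ≠ 0 := hs0.ne'
  have hr_ne : r ≠ 0 := hr0.ne'
  have hconj : Real.HolderConjugate s r := Real.holderConjugate_iff.mpr ⟨hs, by rw [← one_div, ← one_div]; exact hsr⟩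
  have hrs : (r - 1) * s = r := hconj.symm.sub_one_mul_conj
  have hr1 : (0:ℝ) ≤ r - 1 := by linarith
  -- truncations
  set Gn : ℕ → Ω → ℝ≥0∞ := fun n x => min (G x) n with hGn
  have hGn_meas : ∀ n, Measurable (Gn n) := fun n => hGmeas.min measurable_const
  set a : ℕ → ℝ≥0∞ := fun n => ∫⁻ x, Gn n x ^ r ∂μ with ha
  have ha_top : ∀ n, a n ≠ ∞ := by
    intro n
    have h1 : a n ≤ (n:ℝ≥0∞)^r := by
      have := lintegral_mono (μ := μ)
        (f := fun x => Gn n x ^ r) (g := fun _ => (n:ℝ≥0∞)^r)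
        (fun x => ENNReal.rpow_le_rpow (min_le_right _ _) hr0.le)
      rwa [lintegral_const, measure_univ, mul_one] at this
    exact ne_top_of_le_ne_top (ENNReal.rpow_ne_top_of_nonneg hr0.le (ENNReal.natCast_ne_top n)) h1
  have ha_sup : (⨆ n, a n) = ∞ := by
    rw [← hGr]
    rw [← lintegral_iSup (fun n => (hGn_meas n).pow_const r)]
    · refine lintegral_congr fun x => ?_
      obtain ⟨n, hn⟩ := ENNReal.exists_nat_gt (hGfin x)
      refine le_antisymm (iSup_le fun m => ENNReal.rpow_le_rpow (min_le_left _ _) hr0.le) ?_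
      refine le_iSup_of_le n (le_of_eq ?_)
      rw [hGn]
      simp [min_eq_left hn.le]
    · intro m n hmn x
      exact ENNReal.rpow_le_rpow (min_le_min le_rfl (by exact_mod_cast hmn)) hr0.le
  have hex : ∀ k : ℕ, ∃ m, ((4:ℝ≥0∞)^k)^r < a m := by
    intro k
    rw [← lt_iSup_iff, ha_sup]
    exact ENNReal.rpow_lt_top_of_nonneg hr0.le (by simp)
  choose n hn using hex
  set b : ℕ → ℝ≥0∞ := fun k => a (n k) with hb
  have hb0 : ∀ k, b k ≠ 0 := by
    intro k
    have : (0:ℝ≥0∞) < ((4:ℝ≥0∞)^k)^r :=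
      ENNReal.rpow_pos (by positivity) (by simp)
    exact (this.trans (hn k)).ne'
  have hb_top : ∀ k, b k ≠ ∞ := fun k => ha_top _
  set d : ℕ → ℝ≥0∞ := fun k => (b k) ^ (1/s) with hd
  have hd0 : ∀ k, d k ≠ 0 := fun k =>
    (ENNReal.rpow_pos (lt_of_le_of_ne zero_le (Ne.symm (hb0 k))) (hb_top k)).ne'
  have hd_top : ∀ k, d k ≠ ∞ := fun k => ENNReal.rpow_ne_top_of_nonneg (by positivity) (hb_top k)
  set c : ℕ → ℝ≥0∞ := fun k => ((2:ℝ≥0∞)^k * d k)⁻¹ with hc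
  have hc_top : ∀ k, c k ≠ ∞ := by
    intro k
    simp only [hc, ne_eq, ENNReal.inv_eq_top, mul_eq_zero, not_or]
    exact ⟨by positivity, hd0 k⟩
  have hc0 : ∀ k, c k ≠ 0 := by
    intro k
    simp only [hc, ne_eq, ENNReal.inv_eq_zero]
    exact ENNReal.mul_ne_top (ENNReal.pow_ne_top (by simp)) (hd_top k)
  set φ : ℕ → Ω → ℝ≥0∞ := fun k x => c k * Gn (n k) x ^ (r - 1) with hφ
  have hφ_meas : ∀ k, Measurable (φ k) :=
    fun k => (measurable_const.mul ((hGn_meas (n k)).pow_const _))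
  set F : Ω → ℝ≥0∞ := fun x => ∑' k, φ k x with hF
  have hF_meas : Measurable F := Measurable.ennreal_tsum hφ_meas
  -- value of single-term Lp norms
  have hφs : ∀ k, (∫⁻ x, φ k x ^ s ∂μ) ^ (1/s) = (2:ℝ≥0∞)⁻¹^k := by
    intro k
    have h1 : ∀ x, φ k x ^ s = c k ^ s * Gn (n k) x ^ r := by
      intro x
      rw [hφ]
      rw [ENNReal.mul_rpow_of_nonneg _ _ hs0.le, ← ENNReal.rpow_mul, hrs]
    have h2 : ∫⁻ x, φ k x ^ s ∂μ = c k ^ s * b k := by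
      simp_rw [h1]
      rw [lintegral_const_mul _ ((hGn_meas (n k)).pow_const r)]
    rw [h2, ENNReal.mul_rpow_of_nonneg _ _ (by positivity), ← ENNReal.rpow_mul,
      mul_one_div_cancel hs_ne, ENNReal.rpow_one]
    -- c k * d k = 2⁻¹ ^ k
    rw [hc]
    show ((2:ℝ≥0∞)^k * d k)⁻¹ * d k = 2⁻¹ ^ k
    rw [ENNReal.mul_inv (Or.inl (by positivity)) (Or.inr (hd0 k)), mul_assoc,
      ENNReal.inv_mul_cancel (hd0 k) (hd_top k), mul_one, ENNReal.inv_pow]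
  -- F has finite L^s integral
  have hFs : ∫⁻ x, F x ^ s ∂μ ≤ 2^s := by
    have hmono : Monotone (fun N x => ∑ k ∈ Finset.range N, φ k x) := by
      intro M N hMN x
      exact Finset.sum_le_sum_of_subset (Finset.range_subset_range.2 hMN)
    have hmono' : Monotone (fun N => fun x => (∑ k ∈ Finset.range N, φ k x) ^ s) :=
      fun M N hMN x => ENNReal.rpow_le_rpow (hmono hMN x) hs0.le
    have hkey : ∫⁻ x, F x ^ s ∂μ
        = ⨆ N, ∫⁻ x, (∑ k ∈ Finset.range N, φ k x) ^ s ∂μ := by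
      rw [← lintegral_iSup (fun N => (Finset.measurable_sum _ fun k _ => hφ_meas k).pow_const s)
        hmono']
      refine lintegral_congr fun x => ?_
      have hx : F x = ⨆ N, ∑ k ∈ Finset.range N, φ k x := ENNReal.tsum_eq_iSup_nat
      rw [hx]
      exact OrderIso.map_iSup (ENNReal.orderIsoRpow s hs0) _
    rw [hkey]
    refine iSup_le fun N => ?_
    have h1 := aux_mink μ hs.le φ hφ_meas N
    simp only [hφs] at h1
    have h2 : ∑ k ∈ Finset.range N, (2:ℝ≥0∞)⁻¹^k ≤ 2 := by
      refine le_trans (ENNReal.sum_le_tsum _) (le_of_eq ?_)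
      rw [ENNReal.tsum_geometric]
      rw [ENNReal.sub_eq_of_eq_add (by norm_num) (ENNReal.inv_two_add_inv_two).symm]
      simp
    calc ∫⁻ x, (∑ k ∈ Finset.range N, φ k x) ^ s ∂μ
        = ((∫⁻ x, (∑ k ∈ Finset.range N, φ k x) ^ s ∂μ) ^ (1/s)) ^ s := by
          rw [← ENNReal.rpow_mul, one_div_mul_cancel hs_ne, ENNReal.rpow_one]
      _ ≤ 2 ^ s := ENNReal.rpow_le_rpow (h1.trans h2) hs0.le
  -- lower bound on mixed integral
  have hFG : ∫⁻ x, F x * G x ∂μ = ∞ := by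
    refine aux_top_of_forall_pow fun k => ?_
    have hpt : ∀ x, c k * Gn (n k) x ^ r ≤ F x * G x := by
      intro x
      have hsplit : Gn (n k) x ^ r = Gn (n k) x ^ (r-1) * Gn (n k) x := by
        have : Gn (n k) x ^ r = Gn (n k) x ^ ((r-1)+1) := by norm_num
        rw [this, ENNReal.rpow_add_of_nonneg _ _ hr1 zero_le_one, ENNReal.rpow_one]
      calc c k * Gn (n k) x ^ r
          = (c k * Gn (n k) x ^ (r-1)) * Gn (n k) x := by rw [hsplit, mul_assoc]
        _ ≤ F x * G x := mul_le_mul' (ENNReal.le_tsum k) (min_le_left _ _)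
    have hint : ∫⁻ x, c k * Gn (n k) x ^ r ∂μ = c k * b k :=
      lintegral_const_mul _ ((hGn_meas _).pow_const r)
    have hbsplit : d k * b k ^ (1/r) = b k := by
      show b k ^ (1/s) * b k ^ (1/r) = b k
      rw [← ENNReal.rpow_add _ _ (hb0 k) (hb_top k), hsr, ENNReal.rpow_one]
    have h4 : (4:ℝ≥0∞)^k ≤ b k ^ (1/r) := by
      have := ENNReal.rpow_le_rpow (hn k).le (by positivity : (0:ℝ) ≤ 1/r)
      rwa [← ENNReal.rpow_mul, mul_one_div_cancel hr_ne, ENNReal.rpow_one] at this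
    have hckbk : (2:ℝ≥0∞)^k ≤ c k * b k := by
      calc (2:ℝ≥0∞)^k = (2^k)⁻¹ * 4^k := by
            rw [show (4:ℝ≥0∞)^k = 2^k*2^k by rw [← mul_pow]; norm_num, ← mul_assoc,
              ENNReal.inv_mul_cancel (by positivity) (ENNReal.pow_ne_top (by simp)), one_mul]
        _ ≤ (2^k)⁻¹ * b k ^ (1/r) := mul_le_mul_right h4 _
        _ = c k * b k := by
            show _ = (2^k * d k)⁻¹ * b k
            conv_rhs => rw [← hbsplit]
            rw [ENNReal.mul_inv (Or.inl (by positivity)) (Or.inr (hd0 k)), mul_assoc,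
              ← mul_assoc ((d k)⁻¹), ENNReal.inv_mul_cancel (hd0 k) (hd_top k), one_mul]
    exact le_trans (hckbk.trans_eq hint.symm) (lintegral_mono hpt)
  exact ⟨F, hF_meas,
    ne_top_of_le_ne_top (ENNReal.rpow_ne_top_of_nonneg hs0.le (by simp)) hFs, hFG⟩


/-- A measurable `g` belongs to `L_{p'}(μ)` iff `f * g` is integrable for every `f ∈ L_p(μ)`,
where `μ` is a probability measure and `1/p + 1/p' = 1`. -/
theorem stmt0 {Ω : Type*} [MeasurableSpace Ω] (μ : Measure Ω) [IsProbabilityMeasure μ]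
    (p p' : ℝ≥0∞) (hp : 1 ≤ p) (hpq : 1 / p + 1 / p' = 1)
    (g : Ω → ℝ) (hg : Measurable g) :
    MemLp g p' μ ↔ ∀ f : Ω → ℝ, MemLp f p μ → Integrable (fun x => f x * g x) μ := by
  constructor
  · intro hgmem f hf
    rw [← memLp_one_iff_integrable]
    have := MemLp.smul (μ := μ) (f := g) (φ := f) (r := 1) hgmem hf (hpqr := ⟨by simpa [one_div] using hpq⟩)
    exact this
  · intro h
    by_contra hng
    have hgsm : AEStronglyMeasurable g μ := hg.aestronglyMeasurable
    have htop : eLpNorm g p' μ = ∞ := by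
      by_contra hne
      exact hng ⟨hgsm, lt_top_iff_ne_top.2 hne⟩
    by_cases hpt : p = ∞
    · -- p = ∞, p' = 1
      have hp'1 : p' = 1 := by
        rw [hpt] at hpq
        simp only [one_div, ENNReal.inv_top, zero_add] at hpq
        rwa [ENNReal.inv_eq_one] at hpq
      have hfc : MemLp (fun _ : Ω => (1:ℝ)) p μ := memLp_const 1
      have hint := h _ hfc
      simp only [one_mul] at hint
      refine hng ?_
      rw [hp'1]
      exact (memLp_one_iff_integrable).2 hint
    by_cases hp1 : p = 1
    · -- p = 1, p' = ∞
      have hp'top : p' = ∞ := by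
        rw [hp1] at hpq
        have h0 : p'⁻¹ = 0 := by
          have h1 : (1:ℝ≥0∞) + p'⁻¹ = 1 + 0 := by
            rw [add_zero]
            simpa [one_div] using hpq
          exact (ENNReal.add_right_inj (by simp)).mp h1
        rwa [ENNReal.inv_eq_zero] at h0
      have hEss : eLpNormEssSup g μ = ∞ := by
        rw [hp'top, eLpNorm_exponent_top] at htop
        exact htop
      obtain ⟨F, hFmeas, hFint, hFG⟩ := case_inf μ g hg hEss
      have hfin : ∀ᵐ x ∂μ, F x ≠ ∞ := (ae_lt_top hFmeas hFint).mono fun x hx => hx.ne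
      have hmem : MemLp (fun x => (F x).toReal) p μ := by
        rw [hp1]
        refine aux_memLp μ one_ne_zero ENNReal.one_ne_top F hFmeas ?_
        simpa [ENNReal.toReal_one] using hFint
      exact aux_not_integrable μ F hfin g hFG (h _ hmem)
    · -- 1 < p < ∞
      have hp0 : p ≠ 0 := by intro h0; rw [h0] at hp; simp at hp
      have hp'0 : p' ≠ 0 := by
        intro h0; rw [h0] at hpq; simp at hpq
      have hp't : p' ≠ ∞ := by
        intro h0
        rw [h0] at hpq
        simp only [one_div, ENNReal.inv_top, add_zero] at hpq
        rw [ENNReal.inv_eq_one] at hpq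
        exact hp1 hpq
      set s : ℝ := p.toReal with hsdef
      set r : ℝ := p'.toReal with hrdef
      have hs : 1 < s := by
        rw [hsdef, ← ENNReal.toReal_one]
        exact ENNReal.toReal_strict_mono hpt (lt_of_le_of_ne hp (Ne.symm hp1))
      have hsum : 1/s + 1/r = 1 := by
        have h1 := congrArg ENNReal.toReal hpq
        rw [ENNReal.toReal_add (by simp [one_div, hp0]) (by simp [one_div, hp'0]),
          ENNReal.toReal_div, ENNReal.toReal_div] at h1
        simpa using h1
      have hconj : Real.HolderConjugate s r := Real.holderConjugate_iff.mpr ⟨hs, by rw [← one_div, ← one_div]; exact hsum⟩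
      have hr : 1 < r := hconj.symm.lt
      have hGr : ∫⁻ x, (‖g x‖₊ : ℝ≥0∞) ^ r ∂μ = ∞ := by
        rw [eLpNorm_eq_lintegral_rpow_enorm_toReal hp'0 hp't] at htop
        exact (ENNReal.rpow_eq_top_iff_of_pos (by positivity)).mp htop
      obtain ⟨F, hFmeas, hFs, hFG⟩ :=
        case_lt μ hs hr hsum (fun x => (‖g x‖₊ : ℝ≥0∞)) hg.enorm (fun x => by simp) hGr
      have hfin : ∀ᵐ x ∂μ, F x ≠ ∞ := by
        refine (ae_lt_top (hFmeas.pow_const s) hFs).mono fun x hx => ?_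
        intro hFx
        rw [hFx, ENNReal.top_rpow_of_pos (by linarith)] at hx
        exact absurd hx (lt_irrefl _)
      have hmem : MemLp (fun x => (F x).toReal) p μ := aux_memLp μ hp0 hpt F hFmeas hFs
      exact aux_not_integrable μ F hfin g hFG (h _ hmem)
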